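/- Suppose d, m, n, r are integers with n ≥ 2, m ≥ 1, d ≥ 1, m = n·k + r with 0 ≤ r < n, satisfying d²·n ≤ m² and binom(d+2, 2) − 1 ≥ ((m − r)/n + 1)·((m + r)/2). Then n ≤ 9. -/

import Mathlib

/-- Numerical core: if d²n ≤ m² and C(d+2,2) − 1 ≥ ((m−r)/n + 1)·((m+r)/2),
    where m = nk + r, 0 ≤ r < n, n ≥ 2, m ≥ 1, d ≥ 1, then n ≤ 9. -/
theorem stmt_3 (d m n r k : ℕ) (hn : 2 ≤ n) (hm : 1 ≤ m) (hd : 1 ≤ d)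
    (hmk : m = n * k + r) (hr : r < n)
    (hses : d ^ 2 * n ≤ m ^ 2)
    (hdim : (((d + 2).choose 2 : ℚ)) - 1 ≥
      (((m : ℚ) - r) / n + 1) * (((m : ℚ) + r) / 2)) :
    n ≤ 9 := by
  by_contra h
  push_neg at h
  have hn0 : (n : ℚ) ≠ 0 := by positivity
  have hch : (((d + 2).choose 2 : ℚ)) = ((d : ℚ) + 2) * ((d : ℚ) + 1) / 2 := by
    rw [Nat.cast_choose_two]; push_cast; ring
  have hmq : (m : ℚ) = (n : ℚ) * k + r := by exact_mod_cast congrArg Nat.cast hmk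
  have hkq : ((m : ℚ) - r) / n = k := by
    rw [hmq]; field_simp; ring
  rw [hch, hkq] at hdim
  have hdim2 : ((k : ℚ) + 1) * ((m : ℚ) + r) ≤ (d : ℚ) ^ 2 + 3 * d := by
    nlinarith [hdim]
  have hdimN : (k + 1) * (m + r) ≤ d ^ 2 + 3 * d := by exact_mod_cast hdim2
  have hd1 : 1 ≤ d ^ 2 := Nat.one_le_pow _ _ hd
  subst hmk
  have hrr : r * r ≤ n * r := Nat.mul_le_mul_right r hr.le
  have h3 : n * (n * k + r) ≤ n * (3 * d) := by
    nlinarith [hses, Nat.mul_le_mul_left n hdimN, hrr]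
  have hm3 : n * k + r ≤ 3 * d := le_of_mul_le_mul_left h3 (by omega)
  nlinarith [hses, hm3, h, hd1]
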